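/- Let G be a group, K a subgroup, and ρ a unitary representation of G on a complex Hilbert space H. Let v ∈ H be a nonzero K-fixed vector and assume that every K-fixed vector in H is a scalar multiple of v. Then the closed G-cyclic span W of v (the closure of the linear span of {ρ(g)v : g ∈ G}) is irreducible: every closed subspace of W invariant under all operators ρ(g), g ∈ G, equals {0} or W. -/

import Mathlib

/-- If `v` is a nonzero `K`-fixed vector of a unitary representation `ρ`
of `G` and every `K`-fixed vector is a scalar multiple of `v`, then the closed
`G`-cyclic span of `v` is irreducible: its only closed `G`-invariant subspaces are
`⊥` and the cyclic span itself. -/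
theorem cyclicSpan_irreducible_of_unique_fixed_vector
    {G : Type*} [Group G] (K : Subgroup G) {H : Type*}
    [NormedAddCommGroup H] [InnerProductSpace ℂ H] [CompleteSpace H]
    (ρ : G →* (H ≃ₗᵢ[ℂ] H)) (v : H) (hv0 : v ≠ 0)
    (hvK : ∀ h ∈ K, ρ h v = v)
    (huniq : ∀ w : H, (∀ h ∈ K, ρ h w = w) → ∃ c : ℂ, w = c • v) :
    ∀ U : Submodule ℂ H, IsClosed (U : Set H) →
      U ≤ (Submodule.span ℂ (Set.range fun g : G => ρ g v)).topologicalClosure →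
      (∀ (g : G), ∀ u ∈ U, ρ g u ∈ U) →
      U = ⊥ ∨ U = (Submodule.span ℂ (Set.range fun g : G => ρ g v)).topologicalClosure := by
  intro U hUclosed hUle hUinv
  haveI : CompleteSpace U := hUclosed.completeSpace_coe
  -- the orthogonal complement is also invariant
  have hginv : ∀ g : G, ∀ w, ρ g (ρ g⁻¹ w) = w := by
    intro g w
    have h1 : ρ g⁻¹ = (ρ g)⁻¹ := map_inv ρ g
    rw [h1]
    exact (ρ g).apply_symm_apply w
  have hUinv' : ∀ g : G, ∀ x ∈ Uᗮ, ρ g x ∈ Uᗮ := by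
    intro g x hx
    rw [Submodule.mem_orthogonal]
    intro w hw
    have hw' : ρ g⁻¹ w ∈ U := hUinv g⁻¹ w hw
    calc inner ℂ w (ρ g x) = inner ℂ ((ρ g) (ρ g⁻¹ w)) (ρ g x) := by rw [hginv]
      _ = inner ℂ (ρ g⁻¹ w) x := (ρ g).inner_map_map _ _
      _ = (0 : ℂ) := hx _ hw'
  -- decompose v
  obtain ⟨u, hu, z, hz, hvdec⟩ := Submodule.exists_add_mem_mem_orthogonal (K := U) v
  -- u is K-fixed
  have huK : ∀ h ∈ K, ρ h u = u := by
    intro h hh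
    have heq : ρ h u + ρ h z = u + z := by
      rw [← map_add, ← hvdec, hvK h hh, hvdec]
    have hmem1 : ρ h u - u ∈ U := sub_mem (hUinv h u hu) hu
    have hmem2 : ρ h u - u ∈ Uᗮ := by
      have h2 : ρ h u - u = z - ρ h z := by
        rw [sub_eq_sub_iff_add_eq_add]
        exact heq.trans (add_comm u z)
      rw [h2]
      exact sub_mem hz (hUinv' h z hz)
    have h0 : ρ h u - u = 0 :=
      (Submodule.disjoint_def.mp U.orthogonal_disjoint) _ hmem1 hmem2
    exact sub_eq_zero.mp h0
  obtain ⟨c, hc⟩ := huniq u huK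
  by_cases hc0 : c = 0
  · -- u = 0, so v ∈ Uᗮ, hence the whole cyclic span is in Uᗮ, so U = ⊥
    left
    have hvz : v = z := by rw [hvdec, hc, hc0, zero_smul, zero_add]
    have hvU : v ∈ Uᗮ := hvz ▸ hz
    have hspan : Submodule.span ℂ (Set.range fun g : G => ρ g v) ≤ Uᗮ := by
      rw [Submodule.span_le]
      rintro _ ⟨g, rfl⟩
      exact hUinv' g v hvU
    have hW : (Submodule.span ℂ (Set.range fun g : G => ρ g v)).topologicalClosure ≤ Uᗮ :=
      Submodule.topologicalClosure_minimal _ hspan U.isClosed_orthogonal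
    have hUU : U ≤ Uᗮ := hUle.trans hW
    rw [Submodule.eq_bot_iff]
    intro x hx
    exact (Submodule.disjoint_def.mp U.orthogonal_disjoint) x hx (hUU hx)
  · -- u ≠ 0, so v ∈ U, hence the whole cyclic span is in U
    right
    have hvU : v ∈ U := by
      have : v = c⁻¹ • u := by rw [hc, smul_smul, inv_mul_cancel₀ hc0, one_smul]
      rw [this]
      exact U.smul_mem _ hu
    have hspan : Submodule.span ℂ (Set.range fun g : G => ρ g v) ≤ U := by
      rw [Submodule.span_le]
      rintro _ ⟨g, rfl⟩
      exact hUinv g v hvU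
    exact le_antisymm hUle (Submodule.topologicalClosure_minimal _ hspan hUclosed)
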